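/- Let φ be an (anti)morphic involution induced by an involutive letter map t : Σ → Σ, and let L ⊆ Σ* be ⇄φ-closed. Then for every n ≥ 2 and every choice of languages L₁, …, Lₙ with each Lᵢ ∈ {L, φ(L)}, the product L₁L₂⋯Lₙ is contained in L. -/

import Mathlib

/-- The strong φ-bi-catenation of two words. -/
def biCat {α : Type*} (φ : List α → List α) (u v : List α) : Set (List α) :=
  {u ++ v, u ++ φ v, φ u ++ v, φ u ++ φ v, v ++ u, v ++ φ u, φ v ++ u, φ v ++ φ u}

/-- `φ` is the morphic or the antimorphic involution induced by the involutive
letter map `t`. -/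
def IsAminv {α : Type*} (t : α → α) (φ : List α → List α) : Prop :=
  (∀ a, t (t a) = a) ∧
    ((∀ u : List α, φ u = u.map t) ∨ (∀ u : List α, φ u = (u.map t).reverse))

/-- Concatenation product of two languages. -/
def setProd {α : Type*} (A B : Set (List α)) : Set (List α) :=
  Set.image2 (· ++ ·) A B

/-- The product `L₁L₂⋯Lₙ` of a list of languages. -/
def prodList {α : Type*} : List (Set (List α)) → Set (List α)
  | [] => {[]}
  | A :: As => setProd A (prodList As)

/-- A language is ⇄φ-closed if `u ⇄φ v ⊆ L` for all `u, v ∈ L`. -/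
def BiCatClosed {α : Type*} (φ : List α → List α) (L : Set (List α)) : Prop :=
  ∀ u ∈ L, ∀ v ∈ L, biCat φ u v ⊆ L

private lemma key_append {α : Type*} (φ : List α → List α) (L : Set (List α))
    (hL : BiCatClosed φ L) {a b : List α}
    (ha : a ∈ L ∨ a ∈ φ '' L) (hb : b ∈ L ∨ b ∈ φ '' L) : a ++ b ∈ L := by
  rcases ha with ha | ⟨u, hu, rfl⟩ <;> rcases hb with hb | ⟨v, hv, rfl⟩
  · exact hL a ha b hb (by simp [biCat])
  · exact hL a ha v hv (by simp [biCat])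
  · exact hL u hu b hb (by simp [biCat])
  · exact hL u hu v hv (by simp [biCat])

/-- If `L` is ⇄φ-closed, then every product `L₁L₂⋯Lₙ` with `n ≥ 2` and each
`Lᵢ ∈ {L, φ(L)}` is contained in `L`. -/
theorem prod_subset_of_biCatClosed {α : Type*} (t : α → α) (φ : List α → List α)
    (hφ : IsAminv t φ) (L : Set (List α)) (hL : BiCatClosed φ L)
    (n : ℕ) (hn : 2 ≤ n) (Ls : List (Set (List α))) (hlen : Ls.length = n)
    (hmem : ∀ A ∈ Ls, A = L ∨ A = φ '' L) :
    prodList Ls ⊆ L := by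
  subst hlen
  clear hφ
  induction Ls with
  | nil => simp at hn
  | cons A rest ih =>
    intro x hx
    obtain ⟨a, ha, w, hw, rfl⟩ := hx
    have hA : a ∈ L ∨ a ∈ φ '' L := by
      rcases hmem A List.mem_cons_self with rfl | rfl
      · exact Or.inl ha
      · exact Or.inr ha
    match rest, hw with
    | [], hw => simp at hn
    | [B], hw =>
      obtain ⟨b, hb, e, he, rfl⟩ := hw
      obtain rfl : e = [] := he
      simp only [List.append_nil]
      refine key_append φ L hL hA ?_
      rcases hmem B (by simp) with rfl | rfl
      · exact Or.inl hb
      · exact Or.inr hb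
    | B :: C :: rest', hw =>
      have hw' : w ∈ L :=
        ih (fun A' h => hmem A' (List.mem_cons_of_mem _ h)) (by simp) hw
      exact key_append φ L hL hA (Or.inl hw')
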